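/- Let p be an odd prime with p ∤ (s^2 - 4), and let X be a root of x^2 - sx + 1 in F_p (if s^2-4 is a square mod p) or in F_{p^2} otherwise. Then the rank r(p) of the sequence f_n(s,-1) modulo p equals ord(X)/2 if ord(X) is even, and equals ord(X) if ord(X) is odd. -/

import Mathlib

/-- Generalized Fibonacci sequence: f 0 = 0, f 1 = 1, f (n+2) = s * f (n+1) + t * f n. -/
def genFib (s t : ℤ) : ℕ → ℤ
  | 0 => 0
  | 1 => 1
  | n + 2 => s * genFib s t (n + 1) + t * genFib s t n

lemma genFib_cast {F : Type*} [Field F] (s : ℤ) (X Y : F)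
    (hXY : X * Y = 1) (hs : X + Y = (s : F)) :
    ∀ n, ((genFib s (-1) n : ℤ) : F) * (X - Y) = X ^ n - Y ^ n := by
  intro n
  induction n using Nat.twoStepInduction with
  | zero => simp [genFib]
  | one => simp [genFib]
  | more n ihn ihn1 =>
    have h : ((genFib s (-1) (n + 2) : ℤ) : F)
        = (s : F) * ((genFib s (-1) (n + 1) : ℤ) : F) - ((genFib s (-1) n : ℤ) : F) := by
      simp only [genFib]; push_cast; ring
    rw [h]
    have e1 : X ^ (n + 2) = (s : F) * X ^ (n + 1) - X ^ n := by
      have hx2 : X ^ 2 = (s : F) * X - 1 := by linear_combination X * hs - hXY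
      calc X ^ (n + 2) = X ^ n * X ^ 2 := by ring
        _ = X ^ n * ((s : F) * X - 1) := by rw [hx2]
        _ = (s : F) * X ^ (n + 1) - X ^ n := by ring
    have e2 : Y ^ (n + 2) = (s : F) * Y ^ (n + 1) - Y ^ n := by
      have hy2 : Y ^ 2 = (s : F) * Y - 1 := by linear_combination Y * hs - hXY
      calc Y ^ (n + 2) = Y ^ n * Y ^ 2 := by ring
        _ = Y ^ n * ((s : F) * Y - 1) := by rw [hy2]
        _ = (s : F) * Y ^ (n + 1) - Y ^ n := by ring
    rw [e1, e2]
    linear_combination (s : F) * ihn1 - ihn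

/-- The rank r(p) of f_n(s,-1) mod an odd prime p ∤ s²-4 equals ord(X)/2 or ord(X),
where X is a root of x² - sx + 1 in 𝔽_{p²} (which contains 𝔽_p). -/
theorem rank_eq_orderOf (s : ℤ) (p : ℕ) [Fact p.Prime] (hodd : Odd p)
    (hD : ¬ (p : ℤ) ∣ (s ^ 2 - 4))
    (X : GaloisField p 2) (hX : X ^ 2 - (s : GaloisField p 2) * X + 1 = 0)
    (r : ℕ) (hr : 0 < r) (hrdvd : (p : ℤ) ∣ genFib s (-1) r)
    (hleast : ∀ l : ℕ, 0 < l → (p : ℤ) ∣ genFib s (-1) l → r ≤ l) :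
    (Even (orderOf X) → r = orderOf X / 2) ∧ (Odd (orderOf X) → r = orderOf X) := by
  set Y : GaloisField p 2 := (s : GaloisField p 2) - X with hYdef
  have hXY : X * Y = 1 := by rw [hYdef]; linear_combination -hX
  have hs : X + Y = (s : GaloisField p 2) := by rw [hYdef]; ring
  have hXne : X ≠ 0 := by
    intro h; rw [h, zero_mul] at hXY; exact zero_ne_one hXY
  have hcast : ∀ m : ℤ, (((m : ℤ) : GaloisField p 2) = 0 ↔ (p : ℤ) ∣ m) := fun m =>
    CharP.intCast_eq_zero_iff (GaloisField p 2) p m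
  have hXmYne : X - Y ≠ 0 := by
    intro h
    apply hD
    rw [← hcast]
    have h2 : ((s ^ 2 - 4 : ℤ) : GaloisField p 2) = (X - Y) ^ 2 := by
      push_cast
      linear_combination (-(((s : GaloisField p 2) + X + Y)) * hs) + 4 * hXY
    rw [h2, h]; ring
  have key : ∀ n : ℕ, ((p : ℤ) ∣ genFib s (-1) n ↔ X ^ (2 * n) = 1) := by
    intro n
    rw [← hcast]
    have h1 := genFib_cast s X Y hXY hs n
    have hXYn : X ^ n * Y ^ n = 1 := by rw [← mul_pow, hXY, one_pow]
    constructor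
    · intro h
      rw [h, zero_mul] at h1
      have hxy : X ^ n = Y ^ n := by linear_combination -h1
      calc X ^ (2 * n) = X ^ n * X ^ n := by rw [two_mul, pow_add]
        _ = X ^ n * Y ^ n := by rw [hxy]
        _ = 1 := hXYn
    · intro h
      have hXn : X ^ n ≠ 0 := pow_ne_zero _ hXne
      have hxy : X ^ n = Y ^ n := by
        have h2 : X ^ n * X ^ n = X ^ n * Y ^ n := by
          rw [hXYn, ← h, two_mul, pow_add]
        exact mul_left_cancel₀ hXn h2
      rw [hxy, sub_self] at h1
      rcases mul_eq_zero.mp h1 with h' | h'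
      · exact h'
      · exact absurd h' hXmYne
  set d := orderOf X with hd
  have hdpos : 0 < d := by
    have hu : IsUnit X := IsUnit.of_mul_eq_one Y hXY
    have : orderOf X = orderOf hu.unit := by rw [← orderOf_units, hu.unit_spec]
    rw [hd, this]
    exact orderOf_pos _
  have hdvd2r : d ∣ 2 * r := orderOf_dvd_of_pow_eq_one ((key r).mp hrdvd)
  have hle2r : d ≤ 2 * r := Nat.le_of_dvd (by omega) hdvd2r
  constructor
  · intro heven
    obtain ⟨k, hk⟩ := heven
    have hkpos : 0 < k := by omega
    have h1 : r ≤ k := by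
      apply hleast k hkpos
      rw [key k]
      have h2k : 2 * k = d := by omega
      rw [h2k, pow_orderOf_eq_one]
    omega
  · intro hoddd
    have hcop : Nat.Coprime d 2 := hoddd.coprime_two_right
    have hdr : d ∣ r := Nat.Coprime.dvd_of_dvd_mul_left hcop hdvd2r
    have h1 : r ≤ d := by
      apply hleast d hdpos
      rw [key d, mul_comm, pow_mul, pow_orderOf_eq_one, one_pow]
    have h2 : d ≤ r := Nat.le_of_dvd hr hdr
    omega
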